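/- Let m ≥ 2, n ≥ 2. The function β(r) = m·n·r^{2 - 1/m}·(1 - r^{1/m})^{1 - 1/n} on (0,1) is positive, and it attains a unique maximum at r̂ = ((2m - 1)·n / (2·m·n - 1))^m; moreover β is strictly increasing on (0, r̂) and strictly decreasing on (r̂, 1). -/

import Mathlib

open Set

lemma gderiv (k : ℕ) (a : ℝ) (s : ℝ) (hs : 1 - s ≠ 0) :
    HasDerivAt (fun s : ℝ => s ^ k * (1 - s) ^ a)
      ((k:ℝ) * s ^ (k-1) * (1-s) ^ a - a * s ^ k * (1-s) ^ (a-1)) s := by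
  have h1 : HasDerivAt (fun s : ℝ => s ^ k) ((k:ℝ) * s ^ (k-1)) s := hasDerivAt_pow k s
  have hinner : HasDerivAt (fun s : ℝ => 1 - s) (-1) s := by
    simpa using (hasDerivAt_id s).const_sub 1
  have houter : HasDerivAt (fun x : ℝ => x ^ a) (a * (1-s) ^ (a-1)) (1-s) :=
    Real.hasDerivAt_rpow_const (Or.inl hs)
  have h2 := houter.comp s hinner
  have := h1.mul h2
  refine this.congr_deriv ?_
  simp only [Function.comp]
  ring

lemma gcont (k : ℕ) (a : ℝ) (ha : 0 < a) :
    Continuous (fun s : ℝ => s ^ k * (1 - s) ^ a) := by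
  apply (continuous_pow k).mul
  rw [continuous_iff_continuousAt]
  intro s
  exact (Real.continuousAt_rpow_const _ _ (Or.inr ha.le)).comp (by fun_prop)

lemma gsign (k : ℕ) (hk : 1 ≤ k) (a : ℝ) (ha : 0 < a) (x : ℝ)
    (hx0 : 0 < x) (hx1 : x < 1) :
    (k:ℝ) * x ^ (k-1) * (1-x) ^ a - a * x ^ k * (1-x) ^ (a-1)
      = x ^ (k-1) * (1-x) ^ (a-1) * ((k:ℝ) - ((k:ℝ) + a) * x) := by
  have h1 : (0:ℝ) < 1 - x := by linarith
  have hsplit : (1-x) ^ a = (1-x) ^ (a-1) * (1-x) := by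
    rw [← Real.rpow_add_one h1.ne' (a-1)]; ring_nf
  have hxk : x ^ k = x ^ (k-1) * x := by
    conv_lhs => rw [← Nat.sub_add_cancel hk]
    rw [pow_succ]
  rw [hsplit, hxk]; ring

lemma gmono (k : ℕ) (hk : 1 ≤ k) (a : ℝ) (ha : 0 < a) (sstar : ℝ)
    (hss : sstar = (k:ℝ) / ((k:ℝ) + a)) (hs1 : sstar < 1) :
    StrictMonoOn (fun s : ℝ => s ^ k * (1 - s) ^ a) (Icc 0 sstar) := by
  have hka : (0:ℝ) < (k:ℝ) + a := by positivity
  apply StrictMonoOn.mono (s := Icc (0:ℝ) sstar)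
    (strictMonoOn_of_deriv_pos (convex_Icc _ _) (gcont k a ha).continuousOn ?_) le_rfl
  intro x hx
  rw [interior_Icc] at hx
  have hx1 : x < 1 := hx.2.trans hs1
  rw [(gderiv k a x (by linarith)).deriv, gsign k hk a ha x hx.1 hx1]
  have h1 : (0:ℝ) < 1 - x := by linarith
  have h3 : (k:ℝ) - ((k:ℝ) + a) * x > 0 := by
    have : ((k:ℝ) + a) * x < ((k:ℝ) + a) * sstar := by
      exact mul_lt_mul_of_pos_left hx.2 hka
    rw [hss, mul_div_cancel₀ _ hka.ne'] at this
    linarith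
  have h4 := Real.rpow_pos_of_pos h1 (a-1)
  exact mul_pos (mul_pos (pow_pos hx.1 _) h4) h3

lemma ganti (k : ℕ) (hk : 1 ≤ k) (a : ℝ) (ha : 0 < a) (sstar : ℝ)
    (hss : sstar = (k:ℝ) / ((k:ℝ) + a)) (hs0 : 0 < sstar) :
    StrictAntiOn (fun s : ℝ => s ^ k * (1 - s) ^ a) (Icc sstar 1) := by
  have hka : (0:ℝ) < (k:ℝ) + a := by positivity
  apply StrictAntiOn.mono (s := Icc sstar (1:ℝ))
    (strictAntiOn_of_deriv_neg (convex_Icc _ _) (gcont k a ha).continuousOn ?_) le_rfl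
  intro x hx
  rw [interior_Icc] at hx
  have hx0 : 0 < x := hs0.trans hx.1
  rw [(gderiv k a x (by linarith [hx.2])).deriv, gsign k hk a ha x hx0 hx.2]
  have h1 : (0:ℝ) < 1 - x := by linarith [hx.2]
  have h3 : (k:ℝ) - ((k:ℝ) + a) * x < 0 := by
    have : ((k:ℝ) + a) * sstar < ((k:ℝ) + a) * x := mul_lt_mul_of_pos_left hx.1 hka
    rw [hss, mul_div_cancel₀ _ hka.ne'] at this
    linarith
  have h4 := Real.rpow_pos_of_pos h1 (a-1)
  have h5 : (0:ℝ) < x ^ (k-1) := pow_pos hx0 _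
  exact mul_neg_of_pos_of_neg (mul_pos h5 h4) h3

/-- For `m, n ≥ 2`, the function
`β(r) = m·n·r^{2 - 1/m}·(1 - r^{1/m})^{1 - 1/n}` on `(0,1)` is positive and attains a
unique maximum at `r̂ = ((2m - 1)·n / (2·m·n - 1))^m`: it is strictly increasing on
`(0, r̂]` and strictly decreasing on `[r̂, 1)`. -/
theorem stmt11 (m n : ℕ) (hm : 2 ≤ m) (hn : 2 ≤ n)
    (β : ℝ → ℝ)
    (hβ : ∀ r : ℝ, β r = (m : ℝ) * n * r ^ ((2:ℝ) - 1 / (m:ℝ)) *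
      (1 - r ^ ((1:ℝ) / (m:ℝ))) ^ ((1:ℝ) - 1 / (n:ℝ)))
    (rhat : ℝ)
    (hrhat : rhat = (((2 * (m:ℝ) - 1) * n) / (2 * (m:ℝ) * n - 1)) ^ m) :
    (∀ r ∈ Set.Ioo (0:ℝ) 1, 0 < β r) ∧
    StrictMonoOn β (Set.Ioc (0:ℝ) rhat) ∧
    StrictAntiOn β (Set.Ico rhat (1:ℝ)) ∧
    (∀ r ∈ Set.Ioo (0:ℝ) 1, r ≠ rhat → β r < β rhat) := by
  have hm' : (2:ℝ) ≤ (m:ℝ) := by exact_mod_cast hm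
  have hn' : (2:ℝ) ≤ (n:ℝ) := by exact_mod_cast hn
  have hm0 : (0:ℝ) < m := by linarith
  have hn0 : (0:ℝ) < n := by linarith
  have hmr : (0:ℝ) < 1 / (m:ℝ) := by positivity
  have hmn : (0:ℝ) < (m:ℝ) * n := by positivity
  set k : ℕ := 2 * m - 1 with hkdef
  have hk : 1 ≤ k := by omega
  have hkcast : ((k:ℕ):ℝ) = 2 * (m:ℝ) - 1 := by
    have : ((k:ℕ):ℝ) = ((2*m : ℕ) : ℝ) - ((1:ℕ):ℝ) := by
      rw [hkdef, Nat.cast_sub (by omega)]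
    rw [this]; push_cast; ring
  set a : ℝ := 1 - 1 / (n:ℝ) with hadef
  have ha : 0 < a := by
    have : 1 / (n:ℝ) ≤ 1/2 := by
      rw [div_le_div_iff₀ hn0 (by norm_num)]; linarith
    rw [hadef]; linarith
  set sstar : ℝ := ((2 * (m:ℝ) - 1) * n) / (2 * (m:ℝ) * n - 1) with hsdef
  have hden : (0:ℝ) < 2 * (m:ℝ) * n - 1 := by nlinarith
  have hnum : (0:ℝ) < (2 * (m:ℝ) - 1) * n := by nlinarith
  have hs0 : 0 < sstar := by rw [hsdef]; positivity
  have hs1 : sstar < 1 := by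
    rw [hsdef, div_lt_one hden]; nlinarith
  have hss : sstar = (k:ℝ) / ((k:ℝ) + a) := by
    have h2 : 1/(n:ℝ) < 1 := by rw [div_lt_one hn0]; linarith
    have hd2 : (0:ℝ) < 2*(m:ℝ)-1 + (1 - 1/(n:ℝ)) := by linarith
    rw [hsdef, hkcast, hadef, div_eq_div_iff hden.ne' hd2.ne']
    field_simp
    ring
  have hrh : rhat = sstar ^ m := by rw [hrhat, hsdef]
  have hr0 : 0 < rhat := by rw [hrh]; positivity
  have hr1 : rhat < 1 := by rw [hrh]; exact pow_lt_one₀ hs0.le hs1 (by omega)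
  have hphi : rhat ^ ((1:ℝ) / (m:ℝ)) = sstar := by
    rw [hrh, ← Real.rpow_natCast sstar m, ← Real.rpow_mul hs0.le]
    rw [mul_one_div, div_self hm0.ne', Real.rpow_one]
  have key : ∀ r : ℝ, 0 < r →
      β r = (m:ℝ) * n * ((r ^ ((1:ℝ)/(m:ℝ))) ^ k * (1 - r ^ ((1:ℝ)/(m:ℝ))) ^ a) := by
    intro r hr
    rw [hβ, hadef]
    have hexp : r ^ ((2:ℝ) - 1/(m:ℝ)) = (r ^ ((1:ℝ)/(m:ℝ))) ^ k := by
      rw [← Real.rpow_natCast (r ^ ((1:ℝ)/(m:ℝ))) k, ← Real.rpow_mul hr.le, hkcast]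
      congr 1
      field_simp
    rw [hexp]; ring
  have hmono : StrictMonoOn β (Set.Ioc (0:ℝ) rhat) := by
    intro x hx y hy hxy
    have hx' : x ^ ((1:ℝ)/(m:ℝ)) ∈ Icc (0:ℝ) sstar := by
      refine ⟨Real.rpow_nonneg hx.1.le _, ?_⟩
      rw [← hphi]; exact Real.rpow_le_rpow hx.1.le hx.2 hmr.le
    have hy' : y ^ ((1:ℝ)/(m:ℝ)) ∈ Icc (0:ℝ) sstar := by
      refine ⟨Real.rpow_nonneg hy.1.le _, ?_⟩
      rw [← hphi]; exact Real.rpow_le_rpow hy.1.le hy.2 hmr.le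
    have hlt : x ^ ((1:ℝ)/(m:ℝ)) < y ^ ((1:ℝ)/(m:ℝ)) :=
      Real.rpow_lt_rpow hx.1.le hxy hmr
    rw [key x hx.1, key y hy.1]
    exact mul_lt_mul_of_pos_left (gmono k hk a ha sstar hss hs1 hx' hy' hlt) hmn
  have hanti : StrictAntiOn β (Set.Ico rhat (1:ℝ)) := by
    intro x hx y hy hxy
    have hx0 : 0 < x := hr0.trans_le hx.1
    have hy0 : 0 < y := hr0.trans_le hy.1
    have hx' : x ^ ((1:ℝ)/(m:ℝ)) ∈ Icc sstar (1:ℝ) := by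
      refine ⟨?_, Real.rpow_le_one hx0.le hx.2.le hmr.le⟩
      rw [← hphi]; exact Real.rpow_le_rpow hr0.le hx.1 hmr.le
    have hy' : y ^ ((1:ℝ)/(m:ℝ)) ∈ Icc sstar (1:ℝ) := by
      refine ⟨?_, Real.rpow_le_one hy0.le hy.2.le hmr.le⟩
      rw [← hphi]; exact Real.rpow_le_rpow hr0.le hy.1 hmr.le
    have hlt : x ^ ((1:ℝ)/(m:ℝ)) < y ^ ((1:ℝ)/(m:ℝ)) :=
      Real.rpow_lt_rpow hx0.le hxy hmr
    rw [key x hx0, key y hy0]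
    exact mul_lt_mul_of_pos_left (ganti k hk a ha sstar hss hs0 hx' hy' hlt) hmn
  have hpos : ∀ r ∈ Set.Ioo (0:ℝ) 1, 0 < β r := by
    intro r hr
    rw [hβ]
    have h1 : r ^ ((1:ℝ)/(m:ℝ)) < 1 := Real.rpow_lt_one hr.1.le hr.2 hmr
    exact mul_pos (mul_pos hmn (Real.rpow_pos_of_pos hr.1 _))
      (Real.rpow_pos_of_pos (by linarith) _)
  refine ⟨hpos, hmono, hanti, ?_⟩
  intro r hr hne
  rcases lt_or_gt_of_ne hne with h | h
  · exact hmono ⟨hr.1, h.le⟩ ⟨hr0, le_rfl⟩ h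
  · exact hanti ⟨le_rfl, hr1⟩ ⟨h.le, hr.2⟩ h
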